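/- Let (A,·) be the semigroup K-algebra of the rectangular band I×J. Then the centroid of A is trivial: every K-linear map φ : A → A satisfying x·φ(y) = φ(x·y) = φ(x)·y for all x,y ∈ A is a scalar multiple of the identity map, i.e. φ = λ·id_A for some λ ∈ K. -/

import Mathlib

/-- The centroid of the semigroup algebra `(A, ·)` of a rectangular band `I × J` over a
field `K` is trivial: every `K`-linear map `φ : A → A` with
`x·φ(y) = φ(x·y) = φ(x)·y` for all `x, y ∈ A` is a scalar multiple of the identity. -/
theorem centroid_of_rectangular_band_algebra_trivial {K A I J : Type*} [Field K]
    [NonUnitalRing A] [Module K A] [SMulCommClass K A A] [IsScalarTower K A A]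
    [Nonempty I] [Nonempty J]
    (e : Module.Basis (I × J) K A)
    (hmul : ∀ (i k : I) (j l : J), e (i, j) * e (k, l) = e (i, l))
    (φ : A →ₗ[K] A)
    (hφ : ∀ x y : A, x * φ y = φ (x * y) ∧ φ (x * y) = φ x * y) :
    ∃ lam : K, ∀ a : A, φ a = lam • a := by
  classical
  obtain ⟨i0⟩ := ‹Nonempty I›
  obtain ⟨j0⟩ := ‹Nonempty J›
  -- sum of coordinates, as a linear map
  set σ : A →ₗ[K] K :=
    (Finsupp.lsum K (fun _ : I × J => (LinearMap.id : K →ₗ[K] K))).comp e.repr.toLinearMap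
    with hσ
  have hσe : ∀ q : I × J, σ (e q) = 1 := by
    intro q
    simp [hσ, Module.Basis.repr_self, Finsupp.sum_single_index]
  -- sandwich lemma
  have key : ∀ (i : I) (j : J) (x : A), e (i, j) * x * e (i, j) = σ x • e (i, j) := by
    intro i j
    have h : ((LinearMap.mulRight K (e (i, j))).comp (LinearMap.mulLeft K (e (i, j))))
        = σ.smulRight (e (i, j)) := by
      apply e.ext
      rintro ⟨k, l⟩
      simp [LinearMap.mulRight_apply, LinearMap.mulLeft_apply, hmul, hσe]
    intro x
    exact LinearMap.congr_fun h x
  -- each basis vector is mapped to a scalar multiple of itself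
  have heq : ∀ (i : I) (j : J), φ (e (i, j)) = σ (φ (e (i, j))) • e (i, j) := by
    intro i j
    have h1 := (hφ (e (i, j)) (e (i, j))).1
    have h2 := (hφ (e (i, j)) (e (i, j))).2
    rw [hmul] at h1 h2
    calc φ (e (i, j)) = e (i, j) * φ (e (i, j)) := h1.symm
      _ = e (i, j) * (φ (e (i, j)) * e (i, j)) := by rw [← h2, ← h1]
      _ = e (i, j) * φ (e (i, j)) * e (i, j) := (mul_assoc _ _ _).symm
      _ = φ (e (i, j)) * e (i, j) := by rw [h1]
      _ = e (i, j) * φ (e (i, j)) * e (i, j) := by rw [h1]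
      _ = σ (φ (e (i, j))) • e (i, j) := key i j _
  set lam : K := σ (φ (e (i0, j0))) with hlam
  -- the scalar is the same for all basis vectors
  have hconst : ∀ (i : I) (j : J), σ (φ (e (i, j))) = lam := by
    intro i j
    have h1 := (hφ (e (i0, j0)) (e (i, j))).1
    have h2 := (hφ (e (i0, j0)) (e (i, j))).2
    have h3 : e (i0, j0) * φ (e (i, j)) = φ (e (i0, j0)) * e (i, j) := h1.trans h2
    rw [heq i j, heq i0 j0, mul_smul_comm, smul_mul_assoc, hmul] at h3
    have h4 := congrArg (fun a => e.repr a (i0, j)) h3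
    simpa [Module.Basis.repr_self] using h4
  refine ⟨lam, fun a => ?_⟩
  have h : φ = lam • (LinearMap.id : A →ₗ[K] A) := by
    apply e.ext
    rintro ⟨i, j⟩
    rw [heq i j, hconst i j]
    simp
  rw [h]
  simp
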